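/- Let Ω ⊂ ℝ² be a bounded convex domain and u a strictly convex C¹ function on a convex open U ⊂ ℝ² with bounded closure. Then the following are equivalent: (i) ‖Du(x)‖ → +∞ as x → ∂U; (ii) the graph of u (extended lower semicontinuously to the closure) has no non-vertical supporting plane at any boundary point of U; (iii) Du(U) = ℝ². -/

import Mathlib

open Filter Set

section Aux

variable {E : Type*} [NormedAddCommGroup E] [InnerProductSpace ℝ E] [ProperSpace E]

local notation "⟪" x ", " y "⟫" => @inner ℝ _ _ x y


lemma grad_ineq {U : Set E} {u : E → ℝ}
    (hu : ConvexOn ℝ U u) {g : E} {z : E} (hz : z ∈ U)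
    (hg : HasGradientAt u g z) : ∀ x ∈ U, u z + ⟪g, x - z⟫ ≤ u x := by
  intro x hx
  have hdiff : HasDerivAt (fun t : ℝ => u (z + t • (x - z))) ⟪g, x - z⟫ 0 := by
    have hc : HasDerivAt (fun t : ℝ => z + t • (x - z)) (x - z) 0 := by
      simpa using ((hasDerivAt_id (0:ℝ)).smul_const (x - z)).const_add z
    have hz' : HasFDerivAt u ((InnerProductSpace.toDual ℝ E) g) (z + (0:ℝ) • (x - z)) := by
      simpa using hg.hasFDerivAt
    have := hz'.comp_hasDerivAt 0 hc
    simpa [InnerProductSpace.toDual_apply_apply, Function.comp_def] using this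
  have hslope : ∀ᶠ t in nhdsWithin (0:ℝ) (Ioi 0),
      slope (fun t : ℝ => u (z + t • (x - z))) 0 t ≤ u x - u z := by
    filter_upwards [Ioc_mem_nhdsGT_of_mem (by norm_num : (0:ℝ) ∈ Ico (0:ℝ) 1)] with t ht
    have ht0 : 0 < t := ht.1
    have ht1 : t ≤ 1 := ht.2
    have hmem : z + t • (x - z) = (1 - t) • z + t • x := by
      rw [smul_sub, sub_smul, one_smul]; abel
    have hcv := hu.2 hz hx (by linarith : (0:ℝ) ≤ 1 - t) ht0.le (by ring)
    rw [← hmem] at hcv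
    have hcv' : u (z + t • (x - z)) ≤ (1 - t) * u z + t * u x := by
      simpa [smul_eq_mul] using hcv
    have hsl : slope (fun t : ℝ => u (z + t • (x - z))) 0 t
        = (u (z + t • (x - z)) - u z) / t := by
      rw [slope_def_field]; simp
    rw [hsl, div_le_iff₀ ht0]
    nlinarith
  have h2 : Tendsto (slope (fun t : ℝ => u (z + t • (x - z))) 0)
      (nhdsWithin (0:ℝ) (Ioi 0)) (nhds ⟪g, x - z⟫) :=
    (hasDerivAt_iff_tendsto_slope.mp hdiff).mono_left
      (nhdsWithin_mono _ (fun t ht => ne_of_gt ht))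
  have := le_of_tendsto h2 hslope
  linarith

lemma grad_strict {U : Set E} {u : E → ℝ}
    (hu : StrictConvexOn ℝ U u) {g : E} {z : E} (hz : z ∈ U)
    (hg : HasGradientAt u g z) : ∀ x ∈ U, x ≠ z → u z + ⟪g, x - z⟫ < u x := by
  intro x hx hne
  set m := (1/2 : ℝ) • z + (1/2 : ℝ) • x with hm
  have hmU : m ∈ U := hu.1 hz hx (by norm_num) (by norm_num) (by norm_num)
  have h1 : u z + ⟪g, m - z⟫ ≤ u m := grad_ineq hu.convexOn hz hg m hmU
  have h2 : u m < (1/2 : ℝ) * u z + (1/2 : ℝ) * u x := by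
    have := hu.2 hz hx (Ne.symm hne) (by norm_num : (0:ℝ) < 1/2) (by norm_num : (0:ℝ) < 1/2) (by norm_num)
    rw [hm]; simpa [smul_eq_mul] using this
  have h3 : m - z = (1/2 : ℝ) • (x - z) := by
    rw [hm, smul_sub]; module
  rw [h3, real_inner_smul_right] at h1
  linarith

lemma liminf_eq_of_ereal {α : Type*} {F : Filter α} {u : α → ℝ} {b : ℝ}
    (h1 : ∀ ε > (0:ℝ), ∀ᶠ x in F, b - ε < u x)
    (h2 : ∀ ε > (0:ℝ), ∃ᶠ x in F, u x < b + ε) :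
    Filter.liminf (fun x => ((u x : ℝ) : EReal)) F = (b : EReal) := by
  apply le_antisymm
  · by_contra hlt
    push_neg at hlt
    obtain ⟨r, hbr, hrl⟩ := EReal.lt_iff_exists_real_btwn.mp hlt
    have hev : ∀ᶠ x in F, (r : EReal) < (u x : EReal) :=
      Filter.eventually_lt_of_lt_liminf hrl
    have hfr := h2 (r - b) (by exact_mod_cast sub_pos.mpr (by exact_mod_cast hbr))
    obtain ⟨x, hx1, hx2⟩ := (hfr.and_eventually hev).exists
    rw [EReal.coe_lt_coe_iff] at hx2
    linarith
  · by_contra hlt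
    push_neg at hlt
    obtain ⟨r, hlr, hrb⟩ := EReal.lt_iff_exists_real_btwn.mp hlt
    have hfr : ∃ᶠ x in F, (u x : EReal) < (r : EReal) :=
      Filter.frequently_lt_of_liminf_lt (h := hlr)
    have hrb' : (r : ℝ) < b := by exact_mod_cast hrb
    have hev := h1 (b - r) (by linarith)
    obtain ⟨x, hx1, hx2⟩ := (hfr.and_eventually hev).exists
    rw [EReal.coe_lt_coe_iff] at hx1
    linarith

lemma freq_of_liminf_eq {α : Type*} {F : Filter α} {u : α → ℝ} {b : ℝ}
    (h : Filter.liminf (fun x => ((u x : ℝ) : EReal)) F = (b : EReal)) :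
    ∀ ε > (0:ℝ), ∃ᶠ x in F, u x < b + ε := by
  intro ε hε
  have : Filter.liminf (fun x => ((u x : ℝ) : EReal)) F < ((b + ε : ℝ) : EReal) := by
    rw [h]; exact_mod_cast (by linarith : b < b + ε)
  have := Filter.frequently_lt_of_liminf_lt (h := this)
  exact this.mono (fun x hx => by exact_mod_cast hx)

lemma ucont {U : Set E} (hUo : IsOpen U) {u : E → ℝ} {f' : E → E}
    (hgrad : ∀ x ∈ U, HasGradientAt u (f' x) x) : ContinuousOn u U := fun x hx =>
  ((hgrad x hx).differentiableAt).continuousAt.continuousWithinAt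

lemma notA_to_B {U : Set E} (hUo : IsOpen U) (hUc : Convex ℝ U)
    (hUne : U.Nonempty) (hUb : Bornology.IsBounded (closure U))
    {u : E → ℝ} (hu : StrictConvexOn ℝ U u)
    {f' : E → E} (hgrad : ∀ x ∈ U, HasGradientAt u (f' x) x)
    (hnA : ¬ (∀ x₀ ∈ frontier U, Tendsto (fun x => ‖f' x‖) (nhdsWithin x₀ U) atTop)) :
    ∃ x₀ ∈ frontier U, ∃ (y : E) (c : ℝ),
        (∀ x ∈ U, ⟪y, x⟫ - c ≤ u x) ∧
        ((⟪y, x₀⟫ - c : ℝ) : EReal)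
          = Filter.liminf (fun x => ((u x : ℝ) : EReal)) (nhdsWithin x₀ U) := by
  push_neg at hnA
  obtain ⟨x₀, hx₀f, hnT⟩ := hnA
  rw [tendsto_atTop] at hnT
  push_neg at hnT
  obtain ⟨b, hb⟩ := hnT
  -- a sequence in U with bounded gradients converging to x₀
  have hcl : x₀ ∈ closure {x | (‖f' x‖ < b ∧ x ∈ U)} := by
    rw [mem_closure_iff_frequently]
    exact frequently_nhdsWithin_iff.mp hb
  obtain ⟨w, hwmem, hwt⟩ := mem_closure_iff_seq_limit.mp hcl
  obtain ⟨z₀, hz₀⟩ := hUne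
  obtain ⟨R, hR⟩ := hUb.exists_norm_le
  have hRx : ∀ x ∈ U, ‖x‖ ≤ R := fun x hx => hR x (subset_closure hx)
  have hR0 : 0 ≤ R := le_trans (norm_nonneg z₀) (hRx z₀ hz₀)
  -- bounds on u (w n)
  have hlow : ∀ x ∈ U, u z₀ - ‖f' z₀‖ * (2 * R) ≤ u x := by
    intro x hx
    have h := grad_ineq hu.convexOn hz₀ (hgrad z₀ hz₀) x hx
    have hip : |⟪f' z₀, x - z₀⟫| ≤ ‖f' z₀‖ * (2 * R) := by
      refine le_trans (abs_real_inner_le_norm _ _) ?_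
      have : ‖x - z₀‖ ≤ 2 * R := by
        calc ‖x - z₀‖ ≤ ‖x‖ + ‖z₀‖ := norm_sub_le _ _
          _ ≤ 2 * R := by linarith [hRx x hx, hRx z₀ hz₀]
      exact mul_le_mul_of_nonneg_left this (norm_nonneg _)
    have := abs_le.mp hip
    linarith
  have hup : ∀ n, u (w n) ≤ u z₀ + b * (2 * R) := by
    intro n
    have hwU := (hwmem n).2
    have h := grad_ineq hu.convexOn hwU (hgrad _ hwU) z₀ hz₀
    have hip : |⟪f' (w n), z₀ - w n⟫| ≤ b * (2 * R) := by
      refine le_trans (abs_real_inner_le_norm _ _) ?_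
      have h1 : ‖z₀ - w n‖ ≤ 2 * R := by
        calc ‖z₀ - w n‖ ≤ ‖z₀‖ + ‖w n‖ := norm_sub_le _ _
          _ ≤ 2 * R := by linarith [hRx _ hwU, hRx z₀ hz₀]
      have h2 : (0:ℝ) ≤ ‖f' (w n)‖ := norm_nonneg _
      calc ‖f' (w n)‖ * ‖z₀ - w n‖ ≤ b * ‖z₀ - w n‖ :=
            mul_le_mul_of_nonneg_right (hwmem n).1.le (norm_nonneg _)
        _ ≤ b * (2 * R) := by
            have hb0 : 0 ≤ b := le_trans h2 (hwmem n).1.le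
            exact mul_le_mul_of_nonneg_left h1 hb0
    have := abs_le.mp hip
    linarith
  -- compactness
  set lo : ℝ := u z₀ - ‖f' z₀‖ * (2 * R)
  set hi : ℝ := u z₀ + b * (2 * R)
  have hq : ∀ n, (f' (w n), u (w n)) ∈ (Metric.closedBall (0:E) b) ×ˢ (Icc lo hi) := by
    intro n
    refine ⟨by simpa [Metric.mem_closedBall] using (hwmem n).1.le, ⟨hlow _ (hwmem n).2, hup n⟩⟩
  obtain ⟨⟨y, α⟩, hyα, φ, hφ, hconv⟩ :=
    ((isCompact_closedBall (0:E) b).prod isCompact_Icc).tendsto_subseq hq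
  have hy : Tendsto (fun n => f' (w (φ n))) atTop (nhds y) :=
    (continuous_fst.tendsto _).comp hconv
  have hα : Tendsto (fun n => u (w (φ n))) atTop (nhds α) :=
    (continuous_snd.tendsto _).comp hconv
  have hwφ : Tendsto (fun n => w (φ n)) atTop (nhds x₀) := hwt.comp hφ.tendsto_atTop
  have hwφU : ∀ n, w (φ n) ∈ U := fun n => (hwmem (φ n)).2
  -- the supporting plane
  refine ⟨x₀, hx₀f, y, ⟪y, x₀⟫ - α, ?_, ?_⟩
  · intro x hx
    have hlim : Tendsto (fun n => u (w (φ n)) + ⟪f' (w (φ n)), x - w (φ n)⟫) atTop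
        (nhds (α + ⟪y, x - x₀⟫)) :=
      hα.add (hy.inner (tendsto_const_nhds.sub hwφ))
    have hle : ∀ n, u (w (φ n)) + ⟪f' (w (φ n)), x - w (φ n)⟫ ≤ u x := fun n =>
      grad_ineq hu.convexOn (hwφU n) (hgrad _ (hwφU n)) x hx
    have := le_of_tendsto hlim (Eventually.of_forall hle)
    have hexp : ⟪y, x⟫ - (⟪y, x₀⟫ - α) = α + ⟪y, x - x₀⟫ := by
      rw [inner_sub_right]; ring
    linarith [hexp ▸ this]
  · have hval : ⟪y, x₀⟫ - (⟪y, x₀⟫ - α) = α := by ring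
    rw [hval]
    have hNB : (nhdsWithin x₀ U).NeBot :=
      mem_closure_iff_nhdsWithin_neBot.mp hx₀f.1
    refine (liminf_eq_of_ereal ?_ ?_).symm
    · intro ε hε
      have hcont : Tendsto (fun x => α + ⟪y, x - x₀⟫) (nhdsWithin x₀ U) (nhds α) := by
        have : Tendsto (fun x : E => α + ⟪y, x - x₀⟫) (nhds x₀) (nhds (α + ⟪y, x₀ - x₀⟫)) := by
          exact (tendsto_const_nhds.add ((tendsto_const_nhds.inner (tendsto_id.sub tendsto_const_nhds))))
        simpa using this.mono_left nhdsWithin_le_nhds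
      have hev := hcont.eventually (eventually_gt_nhds (by linarith : α - ε < α))
      filter_upwards [hev, self_mem_nhdsWithin] with x h1 h2
      have h3 : ∀ n, u (w (φ n)) + ⟪f' (w (φ n)), x - w (φ n)⟫ ≤ u x := fun n =>
        grad_ineq hu.convexOn (hwφU n) (hgrad _ (hwφU n)) x h2
      have hlim : Tendsto (fun n => u (w (φ n)) + ⟪f' (w (φ n)), x - w (φ n)⟫) atTop
          (nhds (α + ⟪y, x - x₀⟫)) :=
        hα.add (hy.inner (tendsto_const_nhds.sub hwφ))
      have := le_of_tendsto hlim (Eventually.of_forall h3)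
      linarith
    · intro ε hε
      have htd : Tendsto (fun n => w (φ n)) atTop (nhdsWithin x₀ U) :=
        tendsto_nhdsWithin_of_tendsto_nhds_of_eventually_within _ hwφ
          (Eventually.of_forall hwφU)
      have hev : ∀ᶠ n in atTop, u (w (φ n)) < α + ε :=
        hα.eventually (eventually_lt_nhds (by linarith : α < α + ε))
      exact htd.frequently hev.frequently

lemma B_to_notA {U : Set E} (hUo : IsOpen U) (hUc : Convex ℝ U)
    (hUne : U.Nonempty) (hUb : Bornology.IsBounded (closure U))
    {u : E → ℝ} (hu : StrictConvexOn ℝ U u)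
    {f' : E → E} (hgrad : ∀ x ∈ U, HasGradientAt u (f' x) x)
    (hB : ∃ x₀ ∈ frontier U, ∃ (y : E) (c : ℝ),
        (∀ x ∈ U, ⟪y, x⟫ - c ≤ u x) ∧
        ((⟪y, x₀⟫ - c : ℝ) : EReal)
          = Filter.liminf (fun x => ((u x : ℝ) : EReal)) (nhdsWithin x₀ U)) :
    ¬ (∀ x₀ ∈ frontier U, Tendsto (fun x => ‖f' x‖) (nhdsWithin x₀ U) atTop) := by
  obtain ⟨x₀, hx₀f, y, c, hplane, hlim⟩ := hB
  intro hA
  have hT := hA x₀ hx₀f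
  -- setup
  obtain ⟨z₀, hz₀⟩ := hUne
  obtain ⟨ρ, hρ0, hballU⟩ : ∃ ρ > (0:ℝ), Metric.closedBall z₀ (2*ρ) ⊆ U := by
    obtain ⟨ε, hε0, hball⟩ := Metric.isOpen_iff.mp hUo z₀ hz₀
    refine ⟨ε/4, by linarith, ?_⟩
    refine subset_trans ?_ hball
    intro x hx
    rw [Metric.mem_closedBall] at hx
    rw [Metric.mem_ball]
    linarith
  obtain ⟨R, hR⟩ := hUb.exists_norm_le
  have hRx : ∀ x ∈ U, ‖x‖ ≤ R := fun x hx => hR x (subset_closure hx)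
  have hR0 : 0 ≤ R := le_trans (norm_nonneg z₀) (hRx z₀ hz₀)
  set v : E → ℝ := fun x => u x - (⟪y, x⟫ - c) with hv
  have hv0 : ∀ x ∈ U, 0 ≤ v x := fun x hx => by
    have := hplane x hx; simp only [hv]; linarith
  -- max of v on the closed ball
  obtain ⟨pm, hpm, hpmax⟩ : ∃ pm ∈ Metric.closedBall z₀ (2*ρ),
      ∀ q ∈ Metric.closedBall z₀ (2*ρ), v q ≤ v pm := by
    obtain ⟨pm, hpm, hmax⟩ := (isCompact_closedBall z₀ (2*ρ)).exists_isMaxOn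
      ⟨z₀, Metric.mem_closedBall_self (by positivity)⟩
      (ContinuousOn.sub ((ucont hUo hgrad).mono hballU)
        (Continuous.sub (continuous_const.inner continuous_id) continuous_const).continuousOn)
    exact ⟨pm, hpm, fun q hq => hmax hq⟩
  set M : ℝ := v pm with hM
  have hM0 : 0 ≤ M := hv0 pm (hballU hpm)
  set K : ℝ := (ρ + M) / (2*ρ) + ‖y‖ with hK
  -- frequently bounded gradient
  have hfreq : ∃ᶠ x in nhdsWithin x₀ U, ‖f' x‖ ≤ K := by
    rw [Filter.frequently_iff]
    intro Ns hNs
    obtain ⟨r, hr0, hrsub⟩ := Metric.mem_nhdsWithin_iff.mp hNs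
    set ε : ℝ := min 1 (r / (2 * (2*R+1))) with hε
    have hε0 : 0 < ε := by
      apply lt_min one_pos
      positivity
    have hε1 : ε ≤ 1 := min_le_left _ _
    -- find w close to x₀ with small v
    have hfr := freq_of_liminf_eq hlim.symm (ε * ρ / 2) (by positivity)
    have hev1 : ∀ᶠ w in nhdsWithin x₀ U, ⟪y, x₀ - w⟫ < ε * ρ / 2 := by
      have : Tendsto (fun w : E => ⟪y, x₀ - w⟫) (nhdsWithin x₀ U) (nhds 0) := by
        have h0 : Tendsto (fun w : E => ⟪y, x₀ - w⟫) (nhds x₀) (nhds ⟪y, x₀ - x₀⟫) :=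
          tendsto_const_nhds.inner (tendsto_const_nhds.sub tendsto_id)
        simpa using h0.mono_left nhdsWithin_le_nhds
      exact this.eventually (eventually_lt_nhds (by positivity))
    have hev2 : ∀ᶠ w in nhdsWithin x₀ U, w ∈ Metric.ball x₀ (r/2) := by
      apply nhdsWithin_le_nhds
      exact Metric.ball_mem_nhds _ (by positivity)
    obtain ⟨w, hw1, hw2, hw3, hwU⟩ :=
      ((hfr.and_eventually (hev1.and (hev2.and self_mem_nhdsWithin)))).exists
    have hvw : v w < ε * ρ := by
      simp only [hv]
      have : ⟪y, x₀⟫ - ⟪y, w⟫ = ⟪y, x₀ - w⟫ := by rw [inner_sub_right]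
      have h4 := hw1
      -- u w < (⟪y,x₀⟫ - c) + ε*ρ/2
      nlinarith [hw2, hw1, this]
    -- the point x
    set x : E := (1-ε) • w + ε • z₀ with hx
    have hxU : x ∈ U := hUc hwU hz₀ (by linarith) hε0.le (by ring)
    have hxNs : x ∈ Ns := by
      apply hrsub
      constructor
      · rw [Metric.mem_ball]
        have h1 : x - x₀ = ((1-ε) • w + ε • z₀) - x₀ := by rw [hx]
        have hxx : x - x₀ = ((1-ε) • (w - x₀)) + ε • (z₀ - x₀) := by
          rw [hx]; module
        have : ‖x - x₀‖ ≤ (1-ε) * ‖w - x₀‖ + ε * ‖z₀ - x₀‖ := by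
          rw [hxx]
          refine le_trans (norm_add_le _ _) ?_
          rw [norm_smul, norm_smul]
          simp [abs_of_nonneg, hε0.le, (by linarith : (0:ℝ) ≤ 1 - ε)]
        have hwx : ‖w - x₀‖ < r/2 := by
          rw [Metric.mem_ball, dist_comm, dist_eq_norm] at hw3
          rwa [norm_sub_rev]
        have hx₀R : ‖x₀‖ ≤ R := hR x₀ hx₀f.1
        have hz₀x₀ : ‖z₀ - x₀‖ ≤ 2*R + 1 := by
          calc ‖z₀ - x₀‖ ≤ ‖z₀‖ + ‖x₀‖ := norm_sub_le _ _
            _ ≤ 2*R + 1 := by linarith [hRx z₀ hz₀]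
        have hεr : ε ≤ r / (2 * (2*R+1)) := min_le_right _ _
        have hεz : ε * ‖z₀ - x₀‖ ≤ r/2 := by
          calc ε * ‖z₀ - x₀‖ ≤ (r / (2 * (2*R+1))) * (2*R+1) := by
                apply mul_le_mul hεr hz₀x₀ (norm_nonneg _)
                positivity
            _ = r/2 := by field_simp
        rw [dist_eq_norm]
        have h1ε : (1-ε) * ‖w - x₀‖ ≤ ‖w - x₀‖ := by
          nlinarith [norm_nonneg (w - x₀)]
        linarith
      · exact hxU
    refine ⟨x, hxNs, ?_⟩
    -- gradient bound at x
    set g : E := f' x - y with hg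
    have hfx : ‖f' x‖ ≤ ‖g‖ + ‖y‖ := by
      calc ‖f' x‖ = ‖g + y‖ := by rw [hg]; congr 1; abel
        _ ≤ ‖g‖ + ‖y‖ := norm_add_le _ _
    have hKnn : 0 ≤ (ρ + M) / (2*ρ) := by positivity
    by_cases hg0 : g = 0
    · rw [hg0] at hfx; simp at hfx; rw [hK]; linarith
    have hgn : 0 < ‖g‖ := norm_pos_iff.mpr hg0
    set d : E := (2*ρ/‖g‖) • g with hd
    have hdn : ‖d‖ = 2*ρ := by
      rw [hd, norm_smul, Real.norm_eq_abs, abs_of_nonneg (by positivity)]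
      field_simp
    set q : E := z₀ + d with hq
    have hqball : q ∈ Metric.closedBall z₀ (2*ρ) := by
      rw [Metric.mem_closedBall, dist_eq_norm, hq]
      simp [hdn]
    have hqU : q ∈ U := hballU hqball
    set p : E := (1-ε) • w + ε • q with hp
    have hpU : p ∈ U := hUc hwU hqU (by linarith) hε0.le (by ring)
    have hpx : p - x = ε • d := by rw [hp, hx, hq]; module
    have hgi := grad_ineq hu.convexOn hxU (hgrad x hxU) p hpU
    have hupconv : u p ≤ (1-ε) * u w + ε * u q := by
      have := hu.convexOn.2 hwU hqU (by linarith : (0:ℝ) ≤ 1-ε) hε0.le (by ring)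
      simpa [smul_eq_mul] using this
    have hyp : ⟪y, p⟫ = (1-ε) * ⟪y, w⟫ + ε * ⟪y, q⟫ := by
      rw [hp, inner_add_right, real_inner_smul_right, real_inner_smul_right]
    have hvp : v p ≤ v w + ε * M := by
      have hvq : v q ≤ M := hpmax q hqball
      have hvw0 : 0 ≤ v w := hv0 w hwU
      simp only [hv] at *
      nlinarith
    have hvx0 : 0 ≤ v x := hv0 x hxU
    have hkey : ⟪g, p - x⟫ ≤ v p := by
      have hup : u x + ⟪f' x, p - x⟫ ≤ u p := hgi
      have hyd : ⟪y, p - x⟫ = ⟪y, p⟫ - ⟪y, x⟫ := by rw [inner_sub_right]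
      have hsplit : ⟪g, p - x⟫ = ⟪f' x, p - x⟫ - ⟪y, p - x⟫ := by
        rw [hg, inner_sub_left]
      simp only [hv] at hvx0 ⊢
      rw [hsplit, hyd]
      linarith
    have hgd : ⟪g, d⟫ = 2*ρ*‖g‖ := by
      rw [hd, real_inner_smul_right, real_inner_self_eq_norm_mul_norm]
      field_simp
    rw [hpx, real_inner_smul_right, hgd] at hkey
    -- ε * (2ρ‖g‖) ≤ v p ≤ v w + ε M < ε ρ + ε M
    have h2 : ε * (2*ρ*‖g‖) < ε * (ρ + M) := by
      calc ε * (2*ρ*‖g‖) ≤ v p := hkey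
        _ ≤ v w + ε * M := hvp
        _ < ε * ρ + ε * M := by linarith
        _ = ε * (ρ + M) := by ring
    have h3 : 2*ρ*‖g‖ < ρ + M := lt_of_mul_lt_mul_left h2 hε0.le
    have h4 : ‖g‖ ≤ (ρ + M)/(2*ρ) := by
      rw [le_div_iff₀ (by positivity)]
      linarith
    rw [hK]
    linarith
  have hev := hT.eventually (eventually_ge_atTop (K+1))
  obtain ⟨x, hx1, hx2⟩ := (hfreq.and_eventually hev).exists
  linarith

lemma BC_false {U : Set E} (hUo : IsOpen U) (hUc : Convex ℝ U)
    {u : E → ℝ} (hu : StrictConvexOn ℝ U u)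
    {f' : E → E} (hgrad : ∀ x ∈ U, HasGradientAt u (f' x) x)
    (hB : ∃ x₀ ∈ frontier U, ∃ (y : E) (c : ℝ),
        (∀ x ∈ U, ⟪y, x⟫ - c ≤ u x) ∧
        ((⟪y, x₀⟫ - c : ℝ) : EReal)
          = Filter.liminf (fun x => ((u x : ℝ) : EReal)) (nhdsWithin x₀ U))
    (hC : f' '' U = Set.univ) : False := by
  obtain ⟨x₀, hx₀f, y, c, hplane, hlim⟩ := hB
  obtain ⟨z, hzU, hfz⟩ : ∃ z ∈ U, f' z = y := by
    have : y ∈ f' '' U := by rw [hC]; trivial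
    obtain ⟨z, hz, hfz⟩ := this
    exact ⟨z, hz, hfz⟩
  set L : ℝ := ⟪y, x₀⟫ - c with hL
  have hx₀cl : x₀ ∈ closure U := hx₀f.1
  have hx₀nU : x₀ ∉ U := fun h => hx₀f.2 (by rwa [hUo.interior_eq])
  -- tangent inequality: u z + ⟪y, x₀ - z⟫ ≤ L
  have htan : u z + ⟪y, x₀ - z⟫ ≤ L := by
    by_contra hlt
    push_neg at hlt
    set ε : ℝ := (u z + ⟪y, x₀ - z⟫ - L) / 3 with hε
    have hε0 : 0 < ε := by rw [hε]; linarith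
    have hfr := freq_of_liminf_eq hlim.symm ε hε0
    have hev : ∀ᶠ w in nhdsWithin x₀ U, ⟪y, x₀ - z⟫ - ε < ⟪y, w - z⟫ := by
      have h0 : Tendsto (fun w : E => ⟪y, w - z⟫) (nhdsWithin x₀ U) (nhds ⟪y, x₀ - z⟫) :=
        (tendsto_const_nhds.inner (tendsto_id.sub tendsto_const_nhds)).mono_left
          nhdsWithin_le_nhds
      exact h0.eventually (eventually_gt_nhds (by linarith))
    obtain ⟨w, hw1, hw2, hwU⟩ := (hfr.and_eventually (hev.and self_mem_nhdsWithin)).exists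
    have hgi := grad_ineq hu.convexOn hzU (hgrad z hzU) w hwU
    rw [hfz] at hgi
    rw [hε] at *
    linarith
  have haz : u z = ⟪y, z⟫ - c := by
    have h1 := hplane z hzU
    have h2 : ⟪y, x₀ - z⟫ = ⟪y, x₀⟫ - ⟪y, z⟫ := inner_sub_right _ _ _
    rw [hL] at htan
    linarith
  -- midpoint
  set m : E := (1/2 : ℝ) • z + (1/2 : ℝ) • x₀ with hm
  have hmU : m ∈ U := by
    have := hUc.combo_interior_closure_mem_interior
      (by rwa [hUo.interior_eq] : z ∈ interior U) hx₀cl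
      (by norm_num : (0:ℝ) < 1/2) (by norm_num : (0:ℝ) ≤ 1/2) (by norm_num)
    rwa [hUo.interior_eq] at this
  have hmz : m ≠ z := by
    intro h
    apply hx₀nU
    have h3 : (1/2:ℝ) • z + (1/2:ℝ) • x₀ = z := by rw [← hm, h]
    have h2 : (1/2 : ℝ) • x₀ = (1/2 : ℝ) • z := by
      linear_combination (norm := module) h3
    have h5 := smul_right_injective E (by norm_num : (1/2 : ℝ) ≠ 0) h2
    rwa [h5]
  -- strict inequality
  have hstrict : u z + ⟪y, m - z⟫ < u m := by
    have := grad_strict hu hzU (hgrad z hzU) m hmU hmz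
    rwa [hfz] at this
  -- upper bound : u m ≤ (u z + L)/2
  have hub : u m ≤ (u z + L) / 2 := by
    by_contra hlt
    push_neg at hlt
    set ε : ℝ := (u m - (u z + L)/2) / 2 with hε
    have hε0 : 0 < ε := by rw [hε]; linarith
    have hfr := freq_of_liminf_eq hlim.symm ε hε0
    have hucm : ContinuousAt u m :=
      (ucont hUo hgrad).continuousAt (hUo.mem_nhds hmU)
    have hTm : Tendsto (fun w : E => u ((1/2 : ℝ) • z + (1/2 : ℝ) • w))
        (nhdsWithin x₀ U) (nhds (u m)) := by
      refine Tendsto.comp hucm ?_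
      have : Tendsto (fun w : E => (1/2 : ℝ) • z + (1/2 : ℝ) • w) (nhds x₀)
          (nhds ((1/2 : ℝ) • z + (1/2 : ℝ) • x₀)) :=
        tendsto_const_nhds.add (tendsto_id.const_smul _)
      exact (hm ▸ this).mono_left nhdsWithin_le_nhds
    have hev : ∀ᶠ w in nhdsWithin x₀ U, u m - ε < u ((1/2 : ℝ) • z + (1/2 : ℝ) • w) :=
      hTm.eventually (eventually_gt_nhds (by linarith))
    obtain ⟨w, hw1, hw2, hwU⟩ := (hfr.and_eventually (hev.and self_mem_nhdsWithin)).exists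
    have hcv : u ((1/2 : ℝ) • z + (1/2 : ℝ) • w) ≤ (1/2) * u z + (1/2) * u w := by
      have := hu.convexOn.2 hzU hwU (by norm_num : (0:ℝ) ≤ 1/2) (by norm_num : (0:ℝ) ≤ 1/2)
        (by norm_num)
      simpa [smul_eq_mul] using this
    rw [hε] at *
    linarith
  -- combine
  have hinner : ⟪y, m - z⟫ = (L - (⟪y, z⟫ - c)) / 2 := by
    rw [hm, hL]
    have : ((1/2 : ℝ) • z + (1/2 : ℝ) • x₀) - z = (1/2 : ℝ) • (x₀ - z) := by module
    rw [this, real_inner_smul_right, inner_sub_right]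
    ring
  rw [hinner, haz] at hstrict
  linarith [hub, hstrict]

lemma notC_to_B {U : Set E} (hUo : IsOpen U) (hUc : Convex ℝ U)
    (hUne : U.Nonempty) (hUb : Bornology.IsBounded (closure U))
    {u : E → ℝ} (hu : StrictConvexOn ℝ U u)
    {f' : E → E} (hgrad : ∀ x ∈ U, HasGradientAt u (f' x) x)
    (hnC : ¬ (f' '' U = Set.univ)) :
    ∃ x₀ ∈ frontier U, ∃ (y : E) (c : ℝ),
        (∀ x ∈ U, ⟪y, x⟫ - c ≤ u x) ∧
        ((⟪y, x₀⟫ - c : ℝ) : EReal)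
          = Filter.liminf (fun x => ((u x : ℝ) : EReal)) (nhdsWithin x₀ U) := by
  obtain ⟨y, hy⟩ := (Set.ne_univ_iff_exists_notMem _).mp hnC
  obtain ⟨z₀, hz₀⟩ := hUne
  obtain ⟨R, hR⟩ := hUb.exists_norm_le
  have hRx : ∀ x ∈ U, ‖x‖ ≤ R := fun x hx => hR x (subset_closure hx)
  set v : E → ℝ := fun x => u x - ⟪y, x⟫ with hv
  -- v bounded below on U
  have hbdd : BddBelow (v '' U) := by
    refine ⟨u z₀ - (‖f' z₀‖ + ‖y‖) * (2*R) - ‖y‖ * (2*R), ?_⟩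
    rintro t ⟨x, hx, rfl⟩
    have hgi := grad_ineq hu.convexOn hz₀ (hgrad z₀ hz₀) x hx
    have h1 : |⟪f' z₀, x - z₀⟫| ≤ ‖f' z₀‖ * (2*R) := by
      refine le_trans (abs_real_inner_le_norm _ _) ?_
      have : ‖x - z₀‖ ≤ 2*R := le_trans (norm_sub_le _ _) (by linarith [hRx x hx, hRx z₀ hz₀])
      exact mul_le_mul_of_nonneg_left this (norm_nonneg _)
    have h2 : |⟪y, x⟫| ≤ ‖y‖ * (2*R) := by
      refine le_trans (abs_real_inner_le_norm _ _) ?_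
      have hx2 : ‖x‖ ≤ 2*R := by
        have := hRx x hx
        have h0 : (0:ℝ) ≤ R := le_trans (norm_nonneg _) (hRx z₀ hz₀)
        linarith
      exact mul_le_mul_of_nonneg_left hx2 (norm_nonneg _)
    have h3 := abs_le.mp h1
    have h4 := abs_le.mp h2
    have h5 : (0:ℝ) ≤ ‖y‖ * (2*R) := by
      have h0 : (0:ℝ) ≤ R := le_trans (norm_nonneg _) (hRx z₀ hz₀)
      positivity
    simp only [hv]
    nlinarith [norm_nonneg (f' z₀), norm_nonneg y]
  have hne : (v '' U).Nonempty := ⟨v z₀, ⟨z₀, hz₀, rfl⟩⟩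
  set m : ℝ := sInf (v '' U) with hm
  have hmle : ∀ x ∈ U, m ≤ v x := fun x hx => csInf_le hbdd ⟨x, hx, rfl⟩
  -- minimizing sequence
  have hseq : ∀ n : ℕ, ∃ x ∈ U, v x < m + 1/(n+1) := by
    intro n
    obtain ⟨t, ht, hlt⟩ := Real.lt_sInf_add_pos hne (by positivity : (0:ℝ) < 1/(n+1:ℝ))
    obtain ⟨x, hx, rfl⟩ := ht
    exact ⟨x, hx, hlt⟩
  choose w hwU hwv using hseq
  obtain ⟨xs, hxscl, φ, hφ, hconv⟩ := tendsto_subseq_of_bounded hUb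
    (fun n => subset_closure (hwU n) : ∀ n, w n ∈ closure U)
  rw [isClosed_closure.closure_eq] at hxscl
  -- v (w (φ n)) → m
  have hvlim : Tendsto (fun n => v (w (φ n))) atTop (nhds m) := by
    have hle : ∀ n, m ≤ v (w (φ n)) := fun n => hmle _ (hwU _)
    have hge : ∀ n, v (w (φ n)) < m + 1/(n+1) := by
      intro n
      refine lt_of_lt_of_le (hwv (φ n)) ?_
      have h1 : (n:ℝ) + 1 ≤ (φ n : ℝ) + 1 := by
        have : n ≤ φ n := hφ.le_apply
        exact_mod_cast by linarith [this]
      have := one_div_le_one_div_of_le (by positivity : (0:ℝ) < (n:ℝ)+1) h1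
      linarith
    refine tendsto_of_tendsto_of_tendsto_of_le_of_le (g := fun _ : ℕ => m)
      (h := fun n : ℕ => m + 1/((n:ℝ)+1)) tendsto_const_nhds ?_ hle (fun n => (hge n).le)
    have : Tendsto (fun n : ℕ => 1/((n:ℝ)+1)) atTop (nhds 0) :=
      tendsto_one_div_add_atTop_nhds_zero_nat
    simpa using tendsto_const_nhds.add this
  by_cases hxsU : xs ∈ U
  · -- interior minimum : contradiction
    exfalso
    have hvxs : v xs = m := by
      have hc : ContinuousAt v xs := by
        have hcu : ContinuousAt u xs := ((hgrad xs hxsU).differentiableAt).continuousAt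
        exact hcu.sub ((continuous_const.inner continuous_id).continuousAt)
      have := hc.tendsto.comp hconv
      exact tendsto_nhds_unique this hvlim
    have hlocmin : IsLocalMin v xs := by
      filter_upwards [hUo.mem_nhds hxsU] with x hx
      rw [hvxs]
      exact hmle x hx
    have hfd : HasFDerivAt v ((InnerProductSpace.toDual ℝ E) (f' xs) - innerSL ℝ y) xs := by
      have h1 := (hgrad xs hxsU).hasFDerivAt
      have h2 : HasFDerivAt (fun x : E => ⟪y, x⟫) (innerSL ℝ y) xs :=
        (innerSL ℝ y).hasFDerivAt
      exact h1.sub h2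
    have hzero := hlocmin.hasFDerivAt_eq_zero hfd
    apply hy
    refine ⟨xs, hxsU, ?_⟩
    have happ : ∀ wv : E, ⟪f' xs, wv⟫ - ⟪y, wv⟫ = 0 := by
      intro wv
      have := congrArg (fun L => L wv) hzero
      simpa [InnerProductSpace.toDual_apply_apply] using this
    have hz : ⟪f' xs - y, f' xs - y⟫ = 0 := by
      rw [inner_sub_left]
      exact happ _
    have := inner_self_eq_zero.mp hz
    have : f' xs = y := by
      rwa [sub_eq_zero] at this
    exact this
  · -- boundary : supporting plane
    have hxsf : xs ∈ frontier U := by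
      rw [hUo.frontier_eq]
      exact ⟨hxscl, hxsU⟩
    refine ⟨xs, hxsf, y, -m, ?_, ?_⟩
    · intro x hx
      have := hmle x hx
      simp only [hv] at this
      linarith
    · have hNB : (nhdsWithin xs U).NeBot := mem_closure_iff_nhdsWithin_neBot.mp hxscl
      refine (liminf_eq_of_ereal ?_ ?_).symm
      · intro ε hε
        have hcont : Tendsto (fun x : E => ⟪y, x⟫) (nhdsWithin xs U) (nhds ⟪y, xs⟫) :=
          ((continuous_const.inner continuous_id).tendsto xs).mono_left nhdsWithin_le_nhds
        filter_upwards [hcont.eventually (eventually_gt_nhds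
          (by linarith : ⟪y, xs⟫ - ε < ⟪y, xs⟫)), self_mem_nhdsWithin] with x h1 h2
        have := hmle x h2
        simp only [hv] at this
        have hyx : ⟪y, xs⟫ - (-m) - ε < ⟪y, x⟫ + m := by linarith
        linarith
      · intro ε hε
        have htd : Tendsto (fun n => w (φ n)) atTop (nhdsWithin xs U) :=
          tendsto_nhdsWithin_of_tendsto_nhds_of_eventually_within _ hconv
            (Eventually.of_forall (fun n => hwU _))
        have hulim : Tendsto (fun n => u (w (φ n))) atTop (nhds (m + ⟪y, xs⟫)) := by
          have hyy : Tendsto (fun n => ⟪y, w (φ n)⟫) atTop (nhds ⟪y, xs⟫) :=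
            ((continuous_const.inner continuous_id).tendsto xs).comp hconv
          have := hvlim.add hyy
          refine this.congr (fun n => ?_)
          simp only [hv]; ring
        have hev : ∀ᶠ n in atTop, u (w (φ n)) < (⟪y, xs⟫ - (-m)) + ε := by
          refine hulim.eventually (eventually_lt_nhds ?_)
          linarith
        exact htd.frequently hev.frequently

end Aux

/-- For a strictly convex `C¹` function `u` on a bounded convex open set `U ⊂ ℝ²`, the
following are equivalent:
(i) `‖Du(x)‖ → +∞` as `x → ∂U`;
(ii) the graph of the lower semicontinuous extension of `u` has no non-vertical supporting
plane at any boundary point of `U` (a supporting plane at `x₀ ∈ ∂U` being an affine function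
`x ↦ ⟪y, x⟫ − c` lying below `u` on `U` whose value at `x₀` equals the extension
`liminf_{U ∋ x → x₀} u(x)`);
(iii) `Du(U) = ℝ²`. -/
theorem gradient_blowup_tfae
    (U : Set (EuclideanSpace ℝ (Fin 2))) (hUo : IsOpen U) (hUc : Convex ℝ U)
    (hUne : U.Nonempty) (hUb : Bornology.IsBounded (closure U))
    (u : EuclideanSpace ℝ (Fin 2) → ℝ)
    (hu : StrictConvexOn ℝ U u)
    (f' : EuclideanSpace ℝ (Fin 2) → EuclideanSpace ℝ (Fin 2))
    (hgrad : ∀ x ∈ U, HasGradientAt u (f' x) x)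
    (hC1 : ContinuousOn f' U) :
    ((∀ x₀ ∈ frontier U, Tendsto (fun x => ‖f' x‖) (nhdsWithin x₀ U) atTop) ↔
      ¬ ∃ x₀ ∈ frontier U, ∃ (y : EuclideanSpace ℝ (Fin 2)) (c : ℝ),
        (∀ x ∈ U, (inner ℝ y x : ℝ) - c ≤ u x) ∧
        (((inner ℝ y x₀ : ℝ) - c : ℝ) : EReal)
          = Filter.liminf (fun x => ((u x : ℝ) : EReal)) (nhdsWithin x₀ U)) ∧
    ((∀ x₀ ∈ frontier U, Tendsto (fun x => ‖f' x‖) (nhdsWithin x₀ U) atTop) ↔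
      f' '' U = Set.univ) := by
  constructor
  · constructor
    · intro hA hB
      exact B_to_notA hUo hUc hUne hUb hu hgrad hB hA
    · intro hnB
      by_contra hnA
      exact hnB (notA_to_B hUo hUc hUne hUb hu hgrad hnA)
  · constructor
    · intro hA
      by_contra hnC
      exact B_to_notA hUo hUc hUne hUb hu hgrad (notC_to_B hUo hUc hUne hUb hu hgrad hnC) hA
    · intro hC
      by_contra hnA
      exact BC_false hUo hUc hu hgrad (notA_to_B hUo hUc hUne hUb hu hgrad hnA) hC
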